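/- Let R ⊆ S be a ring extension such that R is perinormal in S, and let X be an indeterminate. Then the subring R + XS[X] is perinormal in the polynomial ring S[X], and the subring R + XS[[X]] is perinormal in the power series ring S[[X]]. -/

import Mathlib

/-- A ring homomorphism `f : A →+* B` satisfies going-down: whenever `p₁ ⊆ p₂` are primes of `A`
and `Q₂` is a prime of `B` contracting to `p₂`, there is a prime `Q₁ ⊆ Q₂` of `B`
contracting to `p₁`. -/
def GoingDownHom {A B : Type*} [CommRing A] [CommRing B] (f : A →+* B) : Prop :=
  ∀ (p₁ p₂ : Ideal A), p₁.IsPrime → p₂.IsPrime → p₁ ≤ p₂ →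
    ∀ Q₂ : Ideal B, Q₂.IsPrime → Q₂.comap f = p₂ →
      ∃ Q₁ : Ideal B, Q₁.IsPrime ∧ Q₁ ≤ Q₂ ∧ Q₁.comap f = p₁

/-- The canonical map from the localization of a subring `A ⊆ B` at a submonoid `W ⊆ A`
to the localization of `B` at the image of `W` in `B`. -/
noncomputable def locMap {B : Type*} [CommRing B] (A : Subring B) (W : Submonoid A) :
    Localization W →+* Localization (W.map A.subtype) :=
  IsLocalization.lift (M := W) (S := Localization W)
    (g := (algebraMap B (Localization (W.map A.subtype))).comp A.subtype)
    (fun y => IsLocalization.map_units (M := W.map A.subtype) (Localization (W.map A.subtype))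
      ⟨A.subtype y, ⟨y, y.2, rfl⟩⟩)

/-- A subring `A ⊆ B` is perinormal in `B` at the prime `p` of `A`:  the localization `A_p`
(i.e. the image of `Localization.AtPrime p` in `B_{A∖p}`) is the only local ring `T` between
`A_p` and `B_{A∖p}` whose maximal ideal contracts to `pA_p` and which satisfies going-down
over `A_p`. -/
def PeriAt {B : Type*} [CommRing B] (A : Subring B) (p : Ideal A) (hp : p.IsPrime) : Prop :=
  haveI := hp
  ∀ (T : Subring (Localization (p.primeCompl.map A.subtype)))
    (hT : (locMap A p.primeCompl).range ≤ T),
    IsLocalRing T →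
    (∀ M : Ideal T, M.IsMaximal →
      M.comap ((locMap A p.primeCompl).codRestrict T (fun x => hT ⟨x, rfl⟩)) =
        IsLocalRing.maximalIdeal (Localization.AtPrime p)) →
    GoingDownHom ((locMap A p.primeCompl).codRestrict T (fun x => hT ⟨x, rfl⟩)) →
    T = (locMap A p.primeCompl).range

/-- A subring `A` of `B` is perinormal in `B`. -/
def PerinormalIn {B : Type*} [CommRing B] (A : Subring B) : Prop :=
  ∀ (p : Ideal A) (hp : p.IsPrime), PeriAt A p hp

/-- An integral domain `R` is perinormal:  every local overring of `R`
(local ring between `R` and its fraction field) satisfying going-down over `R`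
is a localization of `R` at a prime ideal. -/
def PerinormalDomain (R : Type*) [CommRing R] [IsDomain R] : Prop :=
  ∀ (T : Subring (FractionRing R)) (hT : (algebraMap R (FractionRing R)).range ≤ T),
    IsLocalRing T →
    GoingDownHom ((algebraMap R (FractionRing R)).codRestrict T (fun x => hT ⟨x, rfl⟩)) →
    ∃ p : Ideal R, p.IsPrime ∧
      (T : Set (FractionRing R)) =
        {x | ∃ r s : R, s ∉ p ∧
          x * algebraMap R (FractionRing R) s = algebraMap R (FractionRing R) r}

/-- A subring `A ⊆ B` is apparently fragile in `B`: for every ring `C` with `A ⊊ C ⊆ B`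
there are a minimal prime `p` of `A` and distinct primes `P, Q` of `C` contracting to `p`. -/
def ApparentlyFragile {B : Type*} [CommRing B] (A : Subring B) : Prop :=
  ∀ (C : Subring B) (hAC : A ≤ C), A ≠ C →
    ∃ p ∈ minimalPrimes A, ∃ P Q : Ideal C, P.IsPrime ∧ Q.IsPrime ∧ P ≠ Q ∧
      P.comap (Subring.inclusion hAC) = p ∧ Q.comap (Subring.inclusion hAC) = p

/-- A subring `A ⊆ B` is fragile in `B`: for every prime `P` of `A`, the extension
`A_P ⊆ B_{A∖P}` is apparently fragile. -/
def Fragile {B : Type*} [CommRing B] (A : Subring B) : Prop :=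
  ∀ (P : Ideal A) (hP : P.IsPrime),
    haveI := hP
    ApparentlyFragile (locMap A P.primeCompl).range

/-- A subring `A ⊆ B` is globally fragile in `B`: for every multiplicative subset `W` of `A`,
the extension `A_W ⊆ B_W` is apparently fragile. -/
def GloballyFragile {B : Type*} [CommRing B] (A : Subring B) : Prop :=
  ∀ W : Submonoid A, ApparentlyFragile (locMap A W).range

/-- An integral domain `S` is a generalized Krull domain: (i) `S` is the intersection of its
localizations at height-one primes (inside its fraction field), (ii) every nonzero element lies
in only finitely many height-one primes, and (iii) the localization at every height-one prime
is a valuation ring. -/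
def IsGenKrull (S : Type*) [CommRing S] [IsDomain S] : Prop :=
  (∀ x : FractionRing S,
      (∀ (p : Ideal S) (hp : p.IsPrime), Order.height (⟨p, hp⟩ : PrimeSpectrum S) = 1 →
        ∃ a s : S, s ∉ p ∧ x * algebraMap S (FractionRing S) s = algebraMap S (FractionRing S) a) →
      ∃ r : S, algebraMap S (FractionRing S) r = x) ∧
  (∀ s : S, s ≠ 0 →
      {p : Ideal S | ∃ hp : p.IsPrime, Order.height (⟨p, hp⟩ : PrimeSpectrum S) = 1 ∧ s ∈ p}.Finite) ∧
  (∀ (p : Ideal S) (hp : p.IsPrime), Order.height (⟨p, hp⟩ : PrimeSpectrum S) = 1 →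
      haveI := hp
      ValuationRing (Localization.AtPrime p))

/-- A prime ideal `Q` has height one. -/
def HeightOne {S : Type*} [CommRing S] (Q : Ideal S) : Prop :=
  ∃ hQ : Q.IsPrime, Order.height (⟨Q, hQ⟩ : PrimeSpectrum S) = 1


section Aux

theorem locMap_algebraMap {B : Type*} [CommRing B] (A : Subring B) (W : Submonoid A) (a : A) :
    locMap A W (algebraMap A (Localization W) a) =
      algebraMap B (Localization (W.map A.subtype)) (a : B) :=
  IsLocalization.lift_eq _ a

theorem locMap_mk' {B : Type*} [CommRing B] (A : Subring B) (W : Submonoid A) (a : A) (w : W) :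
    locMap A W (IsLocalization.mk' (Localization W) a w) =
      IsLocalization.mk' (M := W.map A.subtype) (Localization (W.map A.subtype)) (a : B)
        ⟨((w : A) : B), Submonoid.mem_map_of_mem A.subtype w.2⟩ := by
  rw [IsLocalization.eq_mk'_iff_mul_eq]
  calc locMap A W (IsLocalization.mk' (Localization W) a w) *
        algebraMap B (Localization (W.map A.subtype)) ((w : A) : B)
      = locMap A W (IsLocalization.mk' (Localization W) a w) *
        locMap A W (algebraMap A (Localization W) (w : A)) := by rw [locMap_algebraMap]
    _ = locMap A W (IsLocalization.mk' (Localization W) a w *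
        algebraMap A (Localization W) (w : A)) := (map_mul _ _ _).symm
    _ = locMap A W (algebraMap A (Localization W) a) := by rw [IsLocalization.mk'_spec]
    _ = algebraMap B (Localization (W.map A.subtype)) (a : B) := locMap_algebraMap A W a

theorem locMap_eq_zero {B : Type*} [CommRing B] (A : Subring B) (W : Submonoid A)
    (z : Localization W) (hz : locMap A W z = 0) : z = 0 := by
  obtain ⟨⟨a, w⟩, rfl⟩ := IsLocalization.mk'_surjective (M := W) z
  rw [locMap_mk', IsLocalization.mk'_eq_zero_iff] at hz
  obtain ⟨m, hm⟩ := hz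
  obtain ⟨v, hvW, hveq⟩ := m.2
  rw [IsLocalization.mk'_eq_zero_iff]
  refine ⟨⟨v, hvW⟩, ?_⟩
  apply Subtype.ext
  have hv : (v : B) = (m : B) := hveq
  show ((v : A) : B) * (a : B) = ((0 : A) : B)
  rw [hv, hm]
  rfl

section CaseTwo

variable {B S : Type*} [CommRing B] [CommRing S] (ev : B →+* S) (R : Subring S) (A : Subring B)
  (hA : ∀ b : B, b ∈ A ↔ ev b ∈ R)

/-- The restriction `A →+* R` of `ev`. -/
def evRmap : A →+* R :=
  (ev.comp A.subtype).codRestrict _ (fun a => (hA _).1 a.2)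

theorem evRmap_coe (a : A) : ((evRmap ev R A hA a : R) : S) = ev (a : B) := rfl

variable (P : Ideal A) [P.IsPrime] (p : Ideal R) [p.IsPrime]
  (hPp : ∀ a : A, a ∈ P ↔ evRmap ev R A hA a ∈ p)

include hA hPp

theorem evRmap_le_comap :
    (P.primeCompl : Submonoid A) ≤ p.primeCompl.comap (evRmap ev R A hA : A →* R) := by
  intro x hx
  have hx' : x ∉ P := hx
  show evRmap ev R A hA x ∉ p
  exact fun hin => hx' ((hPp x).2 hin)

theorem ev_le_comap :
    (P.primeCompl.map A.subtype : Submonoid B) ≤ (p.primeCompl.map R.subtype).comap (ev : B →* S) := by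
  rintro b ⟨a, haP, rfl⟩
  have haP' : a ∉ P := haP
  refine ⟨evRmap ev R A hA a, ?_, rfl⟩
  show evRmap ev R A hA a ∉ p
  exact fun hin => haP' ((hPp a).2 hin)

/-- The induced map `A_P → R_p`. -/
noncomputable def psiMap : Localization (P.primeCompl : Submonoid A) →+*
    Localization (p.primeCompl : Submonoid R) :=
  IsLocalization.map _ (evRmap ev R A hA) (evRmap_le_comap ev R A hA P p hPp)

/-- The induced map `B_{A∖P} → S_{R∖p}`. -/
noncomputable def phiMap :
    Localization (P.primeCompl.map A.subtype) →+* Localization (p.primeCompl.map R.subtype) :=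
  IsLocalization.map _ ev (ev_le_comap ev R A hA P p hPp)

theorem psiMap_algebraMap (a : A) :
    psiMap ev R A hA P p hPp (algebraMap A (Localization (P.primeCompl : Submonoid A)) a) =
      algebraMap R (Localization (p.primeCompl : Submonoid R)) (evRmap ev R A hA a) :=
  IsLocalization.map_eq _ _

theorem phiMap_algebraMap (b : B) :
    phiMap ev R A hA P p hPp (algebraMap B (Localization (P.primeCompl.map A.subtype)) b) =
      algebraMap S (Localization (p.primeCompl.map R.subtype)) (ev b) :=
  IsLocalization.map_eq _ _

theorem psiMap_mk' (a : A) (w : (P.primeCompl : Submonoid A)) :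
    psiMap ev R A hA P p hPp (IsLocalization.mk' (Localization (P.primeCompl : Submonoid A)) a w) =
      IsLocalization.mk' (M := (p.primeCompl : Submonoid R))
        (Localization (p.primeCompl : Submonoid R)) (evRmap ev R A hA a)
        ⟨evRmap ev R A hA w, evRmap_le_comap ev R A hA P p hPp w.2⟩ :=
  IsLocalization.map_mk' _ _ _

theorem phiMap_mk' (b : B) (w : (P.primeCompl.map A.subtype : Submonoid B)) :
    phiMap ev R A hA P p hPp
        (IsLocalization.mk' (Localization (P.primeCompl.map A.subtype)) b w) =
      IsLocalization.mk' (M := p.primeCompl.map R.subtype)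
        (Localization (p.primeCompl.map R.subtype)) (ev b)
        ⟨ev w, ev_le_comap ev R A hA P p hPp w.2⟩ :=
  IsLocalization.map_mk' _ _ _

theorem square : (phiMap ev R A hA P p hPp).comp (locMap A P.primeCompl) =
    (locMap R p.primeCompl).comp (psiMap ev R A hA P p hPp) := by
  apply IsLocalization.ringHom_ext (P.primeCompl : Submonoid A)
  ext a
  show phiMap ev R A hA P p hPp (locMap A P.primeCompl (algebraMap A _ a)) =
    locMap R p.primeCompl (psiMap ev R A hA P p hPp (algebraMap A _ a))
  rw [locMap_algebraMap, phiMap_algebraMap, psiMap_algebraMap, locMap_algebraMap]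
  rfl

theorem psiMap_surjective (ι : S →+* B) (hsec : ∀ s, ev (ι s) = s) :
    Function.Surjective (psiMap ev R A hA P p hPp) := by
  intro z
  obtain ⟨⟨r, u⟩, rfl⟩ := IsLocalization.mk'_surjective (M := (p.primeCompl : Submonoid R)) z
  have hmem : ∀ s : S, s ∈ R → ι s ∈ A := fun s hs => (hA _).2 (by rwa [hsec])
  have hu : (⟨ι ((u : R) : S), hmem _ (u : R).2⟩ : A) ∉ P := by
    rw [hPp]
    have he : evRmap ev R A hA ⟨ι ((u : R) : S), hmem _ (u : R).2⟩ = (u : R) :=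
      Subtype.ext (hsec _)
    rw [he]
    exact u.2
  refine ⟨IsLocalization.mk' (M := (P.primeCompl : Submonoid A))
    (Localization (P.primeCompl : Submonoid A))
    (⟨ι (r : S), hmem _ r.2⟩ : A) (⟨⟨ι ((u : R) : S), hmem _ (u : R).2⟩, hu⟩), ?_⟩
  rw [psiMap_mk']
  apply IsLocalization.mk'_eq_of_eq'
  have h1 : evRmap ev R A hA ⟨ι (r : S), hmem _ r.2⟩ = r := Subtype.ext (hsec _)
  have h2 : evRmap ev R A hA ⟨ι ((u : R) : S), hmem _ (u : R).2⟩ = (u : R) :=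
    Subtype.ext (hsec _)
  show r * (evRmap ev R A hA ⟨ι ((u : R) : S), hmem _ (u : R).2⟩ : R) =
    (evRmap ev R A hA ⟨ι (r : S), hmem _ r.2⟩ : R) * ((u : R) : R)
  rw [h1, h2, mul_comm]

theorem phiMap_ker (ι : S →+* B) (hsec : ∀ s, ev (ι s) = s)
    (z : Localization (P.primeCompl.map A.subtype))
    (hz : phiMap ev R A hA P p hPp z = 0) : z ∈ (locMap A P.primeCompl).range := by
  obtain ⟨⟨b, w'⟩, rfl⟩ := IsLocalization.mk'_surjective (M := P.primeCompl.map A.subtype) z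
  rw [phiMap_mk', IsLocalization.mk'_eq_zero_iff] at hz
  obtain ⟨m, hm⟩ := hz
  obtain ⟨v, hvp, hveq⟩ := m.2
  obtain ⟨w₀, hw₀W, hw₀eq⟩ := w'.2
  have hmem : ι ((v : R) : S) ∈ A := (hA _).2 (by rw [hsec]; exact (v : R).2)
  have hcA : (⟨ι ((v : R) : S), hmem⟩ : A) ∉ P := by
    rw [hPp]
    have he : evRmap ev R A hA ⟨ι ((v : R) : S), hmem⟩ = v := Subtype.ext (hsec _)
    rw [he]
    exact hvp
  have hvm : ((v : R) : S) = (m : S) := hveq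
  have hmul : ι ((v : R) : S) * b ∈ A := by
    rw [hA, map_mul, hsec, hvm, hm]; exact R.zero_mem
  refine ⟨IsLocalization.mk' (Localization (P.primeCompl : Submonoid A))
    (⟨ι ((v : R) : S) * b, hmul⟩ : A) (⟨⟨ι ((v : R) : S), hmem⟩, hcA⟩ * ⟨w₀, hw₀W⟩), ?_⟩
  rw [locMap_mk']
  apply IsLocalization.mk'_eq_of_eq'
  simp only [Submonoid.coe_mul]
  push_cast
  have hw : (w₀ : B) = (w' : B) := hw₀eq
  rw [hw]
  ring

theorem psiMap_ker_nonunit (y : Localization (P.primeCompl : Submonoid A))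
    (hy : psiMap ev R A hA P p hPp y = 0) :
    ¬ IsUnit y := by
  obtain ⟨⟨a, w⟩, rfl⟩ := IsLocalization.mk'_surjective (M := (P.primeCompl : Submonoid A)) y
  rw [psiMap_mk', IsLocalization.mk'_eq_zero_iff] at hy
  obtain ⟨m, hm⟩ := hy
  have hmp : (m : R) ∉ p := m.2
  have haP : a ∈ P := by
    rw [hPp]
    by_contra hnot
    have : (m : R) * evRmap ev R A hA a ∈ p := hm ▸ p.zero_mem
    rcases (Ideal.IsPrime.mem_or_mem ‹p.IsPrime› this) with h' | h'
    · exact hmp h'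
    · exact hnot h'
  rw [IsLocalization.AtPrime.isUnit_mk'_iff (Localization (P.primeCompl : Submonoid A)) P]
  exact fun hx => hx haP

end CaseTwo

theorem abstract_step {LA LB LR LS : Type*} [CommRing LA] [CommRing LB] [CommRing LR]
    [CommRing LS] [IsLocalRing LA] [IsLocalRing LR]
    (locA : LA →+* LB) (locR : LR →+* LS) (ψ : LA →+* LR) (φ : LB →+* LS)
    (hψs : Function.Surjective ψ)
    (hsq : φ.comp locA = locR.comp ψ)
    (hφk : ∀ z, φ z = 0 → z ∈ locA.range)
    (hψk : ∀ y, ψ y = 0 → ¬IsUnit y)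
    (hR0 : ∀ z, locR z = 0 → z = 0)
    (T : Subring LB) (hT : locA.range ≤ T) (hTloc : IsLocalRing T)
    (hmax : ∀ M : Ideal T, M.IsMaximal →
      M.comap (locA.codRestrict T (fun x => hT ⟨x, rfl⟩)) = IsLocalRing.maximalIdeal LA)
    (hgd : GoingDownHom (locA.codRestrict T (fun x => hT ⟨x, rfl⟩)))
    (hper : ∀ (T₀ : Subring LS) (hT₀ : locR.range ≤ T₀),
      IsLocalRing T₀ →
      (∀ M : Ideal T₀, M.IsMaximal →
        M.comap (locR.codRestrict T₀ (fun x => hT₀ ⟨x, rfl⟩)) = IsLocalRing.maximalIdeal LR) →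
      GoingDownHom (locR.codRestrict T₀ (fun x => hT₀ ⟨x, rfl⟩)) →
      T₀ = locR.range) :
    T = locA.range := by
  haveI := hTloc
  have hnt : (0 : LS) ≠ 1 := by
    intro h01
    have : (1 : LR) = 0 := hR0 1 (by rw [map_one]; exact h01.symm)
    exact one_ne_zero this
  -- the pushforward of T
  have hT₀ : locR.range ≤ T.map φ := by
    rintro _ ⟨x, rfl⟩
    obtain ⟨y, rfl⟩ := hψs x
    exact ⟨locA y, hT ⟨y, rfl⟩, RingHom.congr_fun hsq y⟩
  -- the projection π : T → T.map φ
  have hπmem : ∀ t : T, φ (t : LB) ∈ T.map φ := fun t => ⟨(t : LB), t.2, rfl⟩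
  have hπs : Function.Surjective ((φ.comp T.subtype).codRestrict (T.map φ) hπmem) := by
    rintro ⟨x, t, ht, rfl⟩
    exact ⟨⟨t, ht⟩, rfl⟩
  haveI : Nontrivial (T.map φ) := ⟨⟨0, 1, fun h => hnt (congrArg Subtype.val h)⟩⟩
  haveI hT₀loc : IsLocalRing (T.map φ) :=
    IsLocalRing.of_surjective' ((φ.comp T.subtype).codRestrict (T.map φ) hπmem) hπs
  have sq'' : ∀ y : LA,
      ((φ.comp T.subtype).codRestrict (T.map φ) hπmem)
        ((locA.codRestrict T (fun x => hT ⟨x, rfl⟩)) y) =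
      (locR.codRestrict (T.map φ) (fun x => hT₀ ⟨x, rfl⟩)) (ψ y) :=
    fun y => Subtype.ext (RingHom.congr_fun hsq y)
  have hcomp : ((φ.comp T.subtype).codRestrict (T.map φ) hπmem).comp
      (locA.codRestrict T (fun x => hT ⟨x, rfl⟩)) =
      (locR.codRestrict (T.map φ) (fun x => hT₀ ⟨x, rfl⟩)).comp ψ :=
    RingHom.ext sq''
  -- units transfer along ψ
  have hunit : ∀ y : LA, IsUnit (ψ y) ↔ IsUnit y := by
    refine fun y => ⟨fun hu => ?_, fun hu => hu.map ψ⟩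
    obtain ⟨v, hv⟩ := hu.exists_right_inv
    obtain ⟨z, rfl⟩ := hψs v
    have h0 : ψ (y * z - 1) = 0 := by rw [map_sub, map_mul, hv, map_one, sub_self]
    have hmem := hψk _ h0
    have hyz : IsUnit (y * z) := by
      by_contra hnu
      have h1 : y * z ∈ IsLocalRing.maximalIdeal LA := hnu
      have hm : y * z - 1 ∈ IsLocalRing.maximalIdeal LA := hmem
      have hone : (1 : LA) ∈ IsLocalRing.maximalIdeal LA := by
        have := Ideal.sub_mem _ h1 hm
        simpa only [sub_sub_cancel] using this
      exact (IsLocalRing.maximalIdeal.isMaximal LA).ne_top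
        (Ideal.eq_top_of_isUnit_mem _ hone isUnit_one)
    exact isUnit_of_mul_isUnit_left hyz
  -- maximal ideals of T.map φ contract to the maximal ideal of LR
  have hmax₀ : ∀ M₀ : Ideal (T.map φ), M₀.IsMaximal →
      M₀.comap (locR.codRestrict (T.map φ) (fun x => hT₀ ⟨x, rfl⟩)) =
        IsLocalRing.maximalIdeal LR := by
    intro M₀ hM₀
    haveI := hM₀
    have hMmax : (M₀.comap ((φ.comp T.subtype).codRestrict (T.map φ) hπmem)).IsMaximal :=
      Ideal.comap_isMaximal_of_surjective _ hπs
    have hMP := hmax _ hMmax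
    ext x
    obtain ⟨y, rfl⟩ := hψs x
    have step1 : ψ y ∈ M₀.comap (locR.codRestrict (T.map φ) (fun x => hT₀ ⟨x, rfl⟩)) ↔
        y ∈ (M₀.comap ((φ.comp T.subtype).codRestrict (T.map φ) hπmem)).comap
          (locA.codRestrict T (fun x => hT ⟨x, rfl⟩)) := by
      simp only [Ideal.mem_comap, ← sq'' y]
    rw [step1, hMP, IsLocalRing.mem_maximalIdeal, IsLocalRing.mem_maximalIdeal,
      mem_nonunits_iff, mem_nonunits_iff]
    exact not_congr (hunit y).symm
  -- going-down transfers
  have hgd₀ : GoingDownHom (locR.codRestrict (T.map φ) (fun x => hT₀ ⟨x, rfl⟩)) := by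
    intro p₁ p₂ hp₁ hp₂ hle Q₂ hQ₂ hQ₂c
    haveI := hQ₂
    have hcq2 : (Q₂.comap ((φ.comp T.subtype).codRestrict (T.map φ) hπmem)).comap
        (locA.codRestrict T (fun x => hT ⟨x, rfl⟩)) = p₂.comap ψ := by
      rw [Ideal.comap_comap, ← hQ₂c, Ideal.comap_comap, hcomp]
    obtain ⟨Q₁', hQ₁'p, hQ₁'le, hQ₁'c⟩ := hgd (p₁.comap ψ) (p₂.comap ψ)
      (hp₁.comap ψ) (hp₂.comap ψ) (Ideal.comap_mono hle)
      (Q₂.comap ((φ.comp T.subtype).codRestrict (T.map φ) hπmem))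
      (hQ₂.comap _) hcq2
    haveI := hQ₁'p
    have hkerπ : RingHom.ker ((φ.comp T.subtype).codRestrict (T.map φ) hπmem) ≤ Q₁' := by
      intro z hz
      have hz0 : φ (z : LB) = 0 :=
        congrArg Subtype.val (RingHom.mem_ker.1 hz)
      obtain ⟨y', hy'⟩ := hφk _ hz0
      have hψy0 : ψ y' = 0 := by
        apply hR0
        have hsqy : φ (locA y') = locR (ψ y') := RingHom.congr_fun hsq y'
        rw [← hsqy, hy', hz0]
      have hmem1 : y' ∈ (p₁.comap ψ : Ideal LA) := by
        rw [Ideal.mem_comap, hψy0]; exact p₁.zero_mem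
      rw [← hQ₁'c] at hmem1
      have hzF : (locA.codRestrict T (fun x => hT ⟨x, rfl⟩)) y' = z := Subtype.ext hy'
      rw [Ideal.mem_comap, hzF] at hmem1
      exact hmem1
    refine ⟨Q₁'.map ((φ.comp T.subtype).codRestrict (T.map φ) hπmem),
      Ideal.map_isPrime_of_surjective hπs hkerπ, Ideal.map_le_iff_le_comap.mpr hQ₁'le, ?_⟩
    have hc1 : (Q₁'.map ((φ.comp T.subtype).codRestrict (T.map φ) hπmem)).comap
        ((φ.comp T.subtype).codRestrict (T.map φ) hπmem) = Q₁' := by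
      rw [Ideal.comap_map_of_surjective _ hπs]
      exact sup_eq_left.mpr hkerπ
    ext x
    obtain ⟨y, rfl⟩ := hψs x
    have step1 : ψ y ∈ (Q₁'.map ((φ.comp T.subtype).codRestrict (T.map φ) hπmem)).comap
        (locR.codRestrict (T.map φ) (fun x => hT₀ ⟨x, rfl⟩)) ↔
        y ∈ ((Q₁'.map ((φ.comp T.subtype).codRestrict (T.map φ) hπmem)).comap
          ((φ.comp T.subtype).codRestrict (T.map φ) hπmem)).comap
          (locA.codRestrict T (fun x => hT ⟨x, rfl⟩)) := by
      simp only [Ideal.mem_comap, ← sq'' y]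
    rw [step1, hc1, hQ₁'c, Ideal.mem_comap]
  -- conclude
  have hT₀eq := hper (T.map φ) hT₀ hT₀loc hmax₀ hgd₀
  refine le_antisymm (fun t ht => ?_) hT
  have h1 : φ t ∈ T.map φ := ⟨t, ht, rfl⟩
  rw [hT₀eq] at h1
  obtain ⟨x, hx⟩ := h1
  obtain ⟨y, rfl⟩ := hψs x
  have h2 : φ (t - locA y) = 0 := by
    have hsqy : φ (locA y) = locR (ψ y) := RingHom.congr_fun hsq y
    rw [map_sub, hsqy, hx, sub_self]
  obtain ⟨y₂, hy₂⟩ := hφk _ h2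
  exact ⟨y₂ + y, by rw [map_add, hy₂]; ring⟩

theorem periAt_aux {B S : Type*} [CommRing B] [CommRing S] (ev : B →+* S) (ι : S →+* B)
    (hsec : ∀ s, ev (ι s) = s) (R : Subring S) (h : PerinormalIn R)
    (A : Subring B) (hA : ∀ b : B, b ∈ A ↔ ev b ∈ R)
    (P : Ideal A) (hP : P.IsPrime) : PeriAt A P hP := by
  haveI := hP
  intro T hT hTloc hmax hgd
  by_cases hc : ∃ c : A, ev (c : B) = 0 ∧ c ∉ P
  · -- Case 1: locMap is surjective
    obtain ⟨c, hc0, hcP⟩ := hc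
    refine le_antisymm (fun z hz => ?_) hT
    obtain ⟨⟨b, w'⟩, rfl⟩ := IsLocalization.mk'_surjective (M := P.primeCompl.map A.subtype) z
    obtain ⟨w₀, hw₀W, hw₀eq⟩ := w'.2
    have hmemA : (c : B) * b ∈ A := by
      rw [hA, map_mul, hc0, zero_mul]; exact R.zero_mem
    have hcW : c ∈ P.primeCompl := hcP
    refine ⟨IsLocalization.mk' (Localization (P.primeCompl : Submonoid A))
      (⟨(c : B) * b, hmemA⟩ : A) (⟨c, hcW⟩ * ⟨w₀, hw₀W⟩), ?_⟩
    rw [locMap_mk']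
    apply IsLocalization.mk'_eq_of_eq'
    simp only [Submonoid.coe_mul]
    push_cast
    have hw : (w₀ : B) = (w' : B) := hw₀eq
    rw [hw]
    ring
  · -- Case 2: P comes from a prime of R
    push_neg at hc
    have hc' : ∀ c : A, ev (c : B) = 0 → c ∈ P := hc
    have hsurjR : Function.Surjective (evRmap ev R A hA) := fun r =>
      ⟨⟨ι r, (hA _).2 (by rw [hsec]; exact r.2)⟩, Subtype.ext (hsec r)⟩
    have hkerR : RingHom.ker (evRmap ev R A hA) ≤ P := by
      intro a ha
      exact hc' a (congrArg Subtype.val (RingHom.mem_ker.1 ha))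
    obtain ⟨p, hp, hPp⟩ : ∃ p : Ideal R, p.IsPrime ∧
        ∀ a : A, a ∈ P ↔ evRmap ev R A hA a ∈ p := by
      refine ⟨P.map (evRmap ev R A hA),
        Ideal.map_isPrime_of_surjective hsurjR hkerR, fun a => ?_⟩
      constructor
      · exact fun ha => Ideal.mem_map_of_mem _ ha
      · intro ha
        have hcm : Ideal.comap (evRmap ev R A hA) (P.map (evRmap ev R A hA)) = P := by
          rw [Ideal.comap_map_of_surjective _ hsurjR]
          exact sup_eq_left.mpr hkerR
        rw [← hcm]
        exact ha
    haveI := hp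
    exact abstract_step (locMap A P.primeCompl) (locMap R p.primeCompl)
      (psiMap ev R A hA P p hPp) (phiMap ev R A hA P p hPp)
      (psiMap_surjective ev R A hA P p hPp ι hsec)
      (square ev R A hA P p hPp)
      (phiMap_ker ev R A hA P p hPp ι hsec)
      (psiMap_ker_nonunit ev R A hA P p hPp)
      (locMap_eq_zero R p.primeCompl)
      T hT hTloc hmax hgd (h p hp)

end Aux

/-- If `R ⊆ S` is a ring extension with `R` perinormal in `S`, then
`R + XS[X]` (the polynomials over `S` whose constant term lies in `R`, i.e. the preimage of
`R` under evaluation at `0`) is perinormal in `S[X]`, and `R + XS[[X]]` (the power series over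
`S` whose constant term lies in `R`) is perinormal in `S[[X]]`. -/
theorem perinormalIn_polynomial_and_powerSeries {S : Type*} [CommRing S]
    (R : Subring S) (h : PerinormalIn R) :
    PerinormalIn (R.comap (Polynomial.evalRingHom (0 : S))) ∧
    PerinormalIn (R.comap (PowerSeries.constantCoeff : PowerSeries S →+* S)) := by
  constructor
  · intro P hP
    exact periAt_aux (Polynomial.evalRingHom (0 : S)) Polynomial.C (fun s => by simp) R h _
      (fun b => Iff.rfl) P hP
  · intro P hP
    exact periAt_aux (PowerSeries.constantCoeff : PowerSeries S →+* S) (PowerSeries.C : S →+* PowerSeries S) (fun s => by simp) R h _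
      (fun b => Iff.rfl) P hP
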